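/- For any real 2-form Ω on an n-dimensional Riemannian Spin^c manifold and any spinor ψ, one has the pointwise estimate ⟨iΩ·ψ, ψ⟩ ≥ −(c_n/2)|Ω|·|ψ|², where c_n = 2⌊n/2⌋^{1/2} and Ω acts by Clifford multiplication (eᵢ*∧eⱼ*)·ψ = eᵢ·eⱼ·ψ. -/

import Mathlib

open Finset Matrix Complex

theorem skew_frobenius_bound {n : ℕ} (T : Matrix (Fin n) (Fin n) ℝ)
    (hT : ∀ j k, T k j = -T j k) (s : ℝ) (hs : 0 ≤ s)
    (hquad : ∀ x : Fin n → ℂ,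
      -(s * ∑ i, Complex.normSq (x i)) ≤
        (∑ j, ∑ k, (starRingEnd ℂ) (x j) * x k * ((T j k : ℂ) * Complex.I)).re) :
    ∑ j, ∑ k, T j k ^ 2 ≤ 2 * (n / 2 : ℕ) * s ^ 2 := by
  classical
  set H : Matrix (Fin n) (Fin n) ℂ := Matrix.of fun j k => (T j k : ℂ) * Complex.I with hHdef
  have hH : H.IsHermitian := by
    ext j k
    simp only [conjTranspose_apply, hHdef, of_apply, star_mul', Complex.star_def, _root_.map_mul,
      Complex.conj_I, Complex.conj_ofReal]
    rw [hT]
    push_cast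
    ring
  set μ := hH.eigenvalues with hμ
  -- quadratic form at a vector
  have quad_eq : ∀ x : Fin n → ℂ, star x ⬝ᵥ H *ᵥ x
      = ∑ j, ∑ k, (starRingEnd ℂ) (x j) * x k * ((T j k : ℂ) * Complex.I) := by
    intro x
    simp only [dotProduct, mulVec, Pi.star_apply, Complex.star_def, Finset.mul_sum, hHdef,
      dotProduct, of_apply]
    exact Finset.sum_congr rfl fun j _ => Finset.sum_congr rfl fun k _ => by ring
  -- eigenvector facts
  have hnorm : ∀ k, ∑ i, Complex.normSq ((hH.eigenvectorBasis k) i) = 1 := by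
    intro k
    have h1 : ‖hH.eigenvectorBasis k‖ = 1 := hH.eigenvectorBasis.orthonormal.1 k
    have h2 := EuclideanSpace.norm_eq (hH.eigenvectorBasis k)
    rw [h1] at h2
    have h3 : (∑ i, ‖(hH.eigenvectorBasis k) i‖ ^ 2) = 1 := Real.sqrt_eq_one.mp h2.symm
    rw [← h3]
    exact Finset.sum_congr rfl fun i _ => by rw [Complex.normSq_eq_norm_sq]
  have eig_form : ∀ k, star (⇑(hH.eigenvectorBasis k) : Fin n → ℂ) ⬝ᵥ H *ᵥ ⇑(hH.eigenvectorBasis k)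
      = (μ k : ℂ) := by
    intro k
    have hm := hH.mulVec_eigenvectorBasis k
    rw [show (H *ᵥ ⇑(hH.eigenvectorBasis k)) = μ k • ⇑(hH.eigenvectorBasis k) from hm]
    simp only [dotProduct, Pi.smul_apply, Pi.star_apply, Complex.star_def, Complex.real_smul]
    have : ∀ i : Fin n, (starRingEnd ℂ) ((hH.eigenvectorBasis k) i) * ((μ k : ℂ) * (hH.eigenvectorBasis k) i)
        = (μ k : ℂ) * (Complex.normSq ((hH.eigenvectorBasis k) i) : ℂ) := by
      intro i
      rw [Complex.normSq_eq_conj_mul_self]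
      ring
    rw [Finset.sum_congr rfl fun i _ => this i, ← Finset.mul_sum,
      show (∑ i, (Complex.normSq ((hH.eigenvectorBasis k) i) : ℂ))
        = ((∑ i, Complex.normSq ((hH.eigenvectorBasis k) i) : ℝ) : ℂ) by push_cast; rfl,
      hnorm k]
    simp
  have hlow : ∀ k, -s ≤ μ k := by
    intro k
    have := hquad (⇑(hH.eigenvectorBasis k))
    rw [← quad_eq, eig_form k] at this
    simpa [hnorm k] using this
  -- conjugation trick for the upper bound
  have hflip : ∀ x : Fin n → ℂ,
      (∑ j, ∑ k, (starRingEnd ℂ) ((star x) j) * (star x) k * ((T j k : ℂ) * Complex.I))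
      = -(∑ j, ∑ k, (starRingEnd ℂ) (x j) * x k * ((T j k : ℂ) * Complex.I)) := by
    intro x
    rw [Finset.sum_comm, ← Finset.sum_neg_distrib]
    refine Finset.sum_congr rfl fun j _ => ?_
    rw [← Finset.sum_neg_distrib]
    refine Finset.sum_congr rfl fun k _ => ?_
    simp only [Pi.star_apply, Complex.star_def, Complex.conj_conj]
    rw [hT]
    push_cast
    ring
  have hup : ∀ k, μ k ≤ s := by
    intro k
    have := hquad (star (⇑(hH.eigenvectorBasis k)))
    rw [hflip] at this
    rw [← quad_eq, eig_form k] at this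
    have hns : ∀ i : Fin n, Complex.normSq ((star (⇑(hH.eigenvectorBasis k))) i)
        = Complex.normSq ((hH.eigenvectorBasis k) i) := by
      intro i; simp [Complex.normSq_conj]
    rw [Finset.sum_congr rfl fun i _ => hns i] at this
    simp only [hnorm k, mul_one, Complex.neg_re, Complex.ofReal_re] at this
    linarith
  -- Frobenius norm equals sum of squared eigenvalues
  have hfrob : ∑ j, ∑ k, T j k ^ 2 = ∑ k, μ k ^ 2 := by
    have h1 : (H * H).trace = ((∑ j, ∑ k, T j k ^ 2 : ℝ) : ℂ) := by
      simp only [Matrix.trace, Matrix.diag, Matrix.mul_apply, hHdef, of_apply]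
      push_cast
      refine Finset.sum_congr rfl fun j _ => ?_
      refine Finset.sum_congr rfl fun k _ => ?_
      rw [hT k j]
      push_cast
      linear_combination (-(T k j : ℂ)^2) * Complex.I_sq
    have h2 : (H * H).trace = ((∑ k, μ k ^ 2 : ℝ) : ℂ) := by
      set U : Matrix (Fin n) (Fin n) ℂ := (hH.eigenvectorUnitary : Matrix (Fin n) (Fin n) ℂ) with hU
      set D : Matrix (Fin n) (Fin n) ℂ := diagonal (RCLike.ofReal ∘ μ) with hD
      have hUU : star U * U = 1 := by
        have := hH.eigenvectorUnitary.2
        exact (Matrix.mem_unitaryGroup_iff').mp this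
      have hspec : H = U * D * star U := hH.spectral_theorem
      have hprod : H * H = U * (D * D) * star U := by
        rw [hspec]
        simp only [Matrix.mul_assoc]
        rw [← Matrix.mul_assoc (star U) U (D * star U), hUU, Matrix.one_mul]
      rw [hprod, Matrix.trace_mul_comm (U * (D * D)) (star U), ← Matrix.mul_assoc, hUU,
        Matrix.one_mul, hD, Matrix.diagonal_mul_diagonal, Matrix.trace_diagonal]
      push_cast
      refine Finset.sum_congr rfl fun k _ => ?_
      simp [pow_two]
    have := h1.symm.trans h2
    exact_mod_cast this
  rw [hfrob]
  have hsq' : ∀ k, μ k ^ 2 ≤ s ^ 2 := fun k => sq_le_sq' (hlow k) (hup k)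
  rcases Nat.even_or_odd n with he | ho
  · have : ∑ k, μ k ^ 2 ≤ ∑ _k : Fin n, s ^ 2 := Finset.sum_le_sum fun k _ => hsq' k
    rw [Finset.sum_const, Finset.card_univ, Fintype.card_fin] at this
    obtain ⟨m, rfl⟩ := he
    have hn2 : 2 * ((m + m) / 2 : ℕ) = ((m + m : ℕ) : ℝ) := by
      rw [show (2 : ℝ) * (((m + m) / 2 : ℕ) : ℝ) = ((2 * ((m + m) / 2) : ℕ) : ℝ) by push_cast; ring]
      congr 1
      omega
    rw [hn2]
    simpa [nsmul_eq_mul] using this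
  · -- odd case: some eigenvalue vanishes
    have hdetT : T.det = 0 := by
      have h1 : T.det = (-1 : ℝ) ^ n * T.det := by
        conv_lhs => rw [← Matrix.det_transpose]
        have : Tᵀ = -T := by
          ext j k
          simp only [Matrix.transpose_apply, Matrix.neg_apply]
          exact hT j k
        rw [this, Matrix.det_neg]
        simp [Fintype.card_fin]
      rw [ho.neg_one_pow] at h1
      linarith
    have hdetH : H.det = 0 := by
      have hHs : H = Complex.I • (T.map (Complex.ofReal)) := by
        ext j k
        simp only [hHdef, of_apply, Matrix.smul_apply, Matrix.map_apply, smul_eq_mul]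
        ring
      have hmapdet : (T.map (Complex.ofReal)).det = ((T.det : ℝ) : ℂ) :=
        (RingHom.map_det Complex.ofRealHom T).symm
      rw [hHs, Matrix.det_smul, hmapdet, hdetT]
      simp
    have hprod0 := hH.det_eq_prod_eigenvalues
    rw [hdetH] at hprod0
    obtain ⟨k₀, -, hk₀⟩ := Finset.prod_eq_zero_iff.mp hprod0.symm
    have hk0 : μ k₀ = 0 := by rw [hμ]; exact RCLike.ofReal_eq_zero.mp hk₀
    have hsplit : ∑ k, μ k ^ 2 = ∑ k ∈ Finset.univ.erase k₀, μ k ^ 2 := by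
      rw [← Finset.sum_erase_add _ _ (Finset.mem_univ k₀), hk0]
      simp
    rw [hsplit]
    have hb : ∑ k ∈ Finset.univ.erase k₀, μ k ^ 2 ≤ ∑ _k ∈ Finset.univ.erase k₀, s ^ 2 :=
      Finset.sum_le_sum fun k _ => hsq' k
    rw [Finset.sum_const, Finset.card_erase_of_mem (Finset.mem_univ k₀), Finset.card_univ,
      Fintype.card_fin] at hb
    obtain ⟨m, hm'⟩ := ho
    have hc : ((n - 1 : ℕ) : ℝ) = 2 * (n / 2 : ℕ) := by
      rw [show (2 : ℝ) * ((n / 2 : ℕ) : ℝ) = ((2 * (n / 2) : ℕ) : ℝ) by push_cast; ring]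
      congr 1
      omega
    calc ∑ k ∈ Finset.univ.erase k₀, μ k ^ 2 ≤ (n - 1 : ℕ) * s ^ 2 := by
          simpa [nsmul_eq_mul] using hb
      _ = 2 * (n / 2 : ℕ) * s ^ 2 := by rw [hc]

open Finset

/-- Curvature term estimate (algebraic model): for a real 2-form `Ω` acting on a
Hermitian Clifford module by `Ω·ψ = Σ_{i<j} Ω_{ij} eᵢ·eⱼ·ψ`, one has
`⟨iΩ·ψ, ψ⟩ ≥ −(c_n/2)|Ω||ψ|²` with `c_n = 2⌊n/2⌋^{1/2}`. -/
theorem two_form_clifford_estimate {Sp : Type*} [NormedAddCommGroup Sp]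
    [InnerProductSpace ℂ Sp] (n : ℕ) (hn : 2 ≤ n)
    (c : Fin n → Sp →ₗ[ℂ] Sp)
    (hskew : ∀ i (φ χ : Sp), (inner ℂ (c i φ) χ : ℂ) = -(inner ℂ φ (c i χ) : ℂ))
    (hsq : ∀ i (φ : Sp), c i (c i φ) = -φ)
    (hanti : ∀ i j, i ≠ j → ∀ φ : Sp, c i (c j φ) = -c j (c i φ))
    (Ω : Fin n → Fin n → ℝ) (ψ : Sp) :
    -(2 * Real.sqrt (n / 2 : ℕ) / 2) *
        Real.sqrt (∑ i, ∑ j, if i < j then (Ω i j) ^ 2 else 0) * ‖ψ‖ ^ 2 ≤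
      (inner ℂ (Complex.I • ∑ i, ∑ j, if i < j then (Ω i j : ℂ) • c i (c j ψ) else 0) ψ : ℂ).re := by
  classical
  set s : ℝ := ‖ψ‖ ^ 2 with hs_def
  have hs : 0 ≤ s := by positivity
  set T : Matrix (Fin n) (Fin n) ℝ :=
    Matrix.of (fun j k => (inner ℂ (c j ψ) (c k ψ) : ℂ).im) with hTdef
  -- Gram matrix facts
  have hGswap : ∀ j k : Fin n, j ≠ k →
      (inner ℂ (c j ψ) (c k ψ) : ℂ) = -(inner ℂ (c k ψ) (c j ψ) : ℂ) := by
    intro j k hjk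
    rw [hskew j ψ (c k ψ), hanti j k hjk ψ, inner_neg_right, neg_neg,
      hskew k ψ (c j ψ), neg_neg]
  have hGdiag : ∀ j : Fin n, (inner ℂ (c j ψ) (c j ψ) : ℂ) = ((s : ℝ) : ℂ) := by
    intro j
    rw [hskew j ψ (c j ψ), hsq j ψ, inner_neg_right, neg_neg, hs_def]
    push_cast
    exact inner_self_eq_norm_sq_to_K ψ
  have hTdiag : ∀ j : Fin n, T j j = 0 := by
    intro j
    show (inner ℂ (c j ψ) (c j ψ) : ℂ).im = 0
    rw [hGdiag j]
    simp
  have hTskew : ∀ j k : Fin n, T k j = -T j k := by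
    intro j k
    by_cases h : j = k
    · subst h; rw [hTdiag]; simp [hTdiag]
    · show (inner ℂ (c k ψ) (c j ψ) : ℂ).im = -(inner ℂ (c j ψ) (c k ψ) : ℂ).im
      rw [hGswap k j (Ne.symm h)]
      simp
  have hGre : ∀ j k : Fin n, j ≠ k → (inner ℂ (c j ψ) (c k ψ) : ℂ).re = 0 := by
    intro j k h
    have h1 := congrArg Complex.re (hGswap j k h)
    have h2 : (inner ℂ (c k ψ) (c j ψ) : ℂ) = (starRingEnd ℂ) (inner ℂ (c j ψ) (c k ψ) : ℂ) :=
      (inner_conj_symm _ _).symm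
    rw [h2] at h1
    simp only [Complex.neg_re, Complex.conj_re] at h1
    linarith
  have hGsplit : ∀ j k : Fin n, (inner ℂ (c j ψ) (c k ψ) : ℂ)
      = (if j = k then ((s : ℝ) : ℂ) else 0) + (T j k : ℝ) * Complex.I := by
    intro j k
    by_cases h : j = k
    · subst h
      rw [hGdiag j]
      simp [hTdiag j]
    · apply Complex.ext
      · simp [hGre j k h, h]
      · simp [h]
        rfl
  -- quadratic form positivity
  have hquad : ∀ x : Fin n → ℂ,
      -(s * ∑ i, Complex.normSq (x i)) ≤
        (∑ j, ∑ k, (starRingEnd ℂ) (x j) * x k * ((T j k : ℝ) * Complex.I)).re := by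
    intro x
    set v : Sp := ∑ j, x j • (c j ψ) with hv_def
    have hv : (0 : ℝ) ≤ (inner ℂ v v : ℂ).re := by
      rw [show (inner ℂ v v : ℂ) = ((‖v‖ : ℂ)) ^ 2 from inner_self_eq_norm_sq_to_K v,
        show ((‖v‖ : ℂ)) ^ 2 = ((‖v‖ ^ 2 : ℝ) : ℂ) by push_cast; ring, Complex.ofReal_re]
      positivity
    have hvv : (inner ℂ v v : ℂ)
        = ((s * ∑ i, Complex.normSq (x i) : ℝ) : ℂ)
          + ∑ j, ∑ k, (starRingEnd ℂ) (x j) * x k * ((T j k : ℝ) * Complex.I) := by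
      have step1 : (inner ℂ v v : ℂ)
          = ∑ j, ∑ k, (starRingEnd ℂ) (x j) * x k * (inner ℂ (c j ψ) (c k ψ) : ℂ) := by
        rw [hv_def, sum_inner]
        refine Finset.sum_congr rfl fun j _ => ?_
        rw [inner_smul_left, inner_sum, Finset.mul_sum]
        refine Finset.sum_congr rfl fun k _ => ?_
        rw [inner_smul_right]
        ring
      rw [step1]
      have step2 : ∀ j k : Fin n, (starRingEnd ℂ) (x j) * x k * (inner ℂ (c j ψ) (c k ψ) : ℂ)
          = (if j = k then (starRingEnd ℂ) (x j) * x k * ((s : ℝ) : ℂ) else 0)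
            + (starRingEnd ℂ) (x j) * x k * ((T j k : ℝ) * Complex.I) := by
        intro j k
        rw [hGsplit j k, mul_add]
        congr 1
        by_cases h : j = k <;> simp [h]
      rw [Finset.sum_congr rfl fun j _ => Finset.sum_congr rfl fun k _ => step2 j k]
      rw [Finset.sum_congr rfl fun j _ => Finset.sum_add_distrib, Finset.sum_add_distrib]
      congr 1
      have step3 : ∀ j : Fin n,
          (∑ k, if j = k then (starRingEnd ℂ) (x j) * x k * ((s : ℝ) : ℂ) else 0)
            = ((Complex.normSq (x j) : ℝ) : ℂ) * ((s : ℝ) : ℂ) := by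
        intro j
        rw [Finset.sum_ite_eq Finset.univ j (fun k => (starRingEnd ℂ) (x j) * x k * ((s : ℝ) : ℂ))]
        simp [Complex.normSq_eq_conj_mul_self]
      rw [Finset.sum_congr rfl fun j _ => step3 j, ← Finset.sum_mul]
      push_cast
      ring
    have := congrArg Complex.re hvv
    rw [this] at hv
    simp only [Complex.add_re, Complex.ofReal_re] at hv
    linarith
  -- apply the key matrix bound
  have hkey := skew_frobenius_bound T hTskew s hs hquad
  -- identify the right-hand side
  have hmain : (inner ℂ (Complex.I • ∑ i, ∑ j, if i < j then (Ω i j : ℂ) • c i (c j ψ) else 0) ψ : ℂ).re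
      = ∑ i, ∑ j, if i < j then Ω i j * T i j else 0 := by
    have hSz : (inner ℂ (∑ i, ∑ j, if i < j then (Ω i j : ℂ) • c i (c j ψ) else 0) ψ : ℂ)
        = ∑ i, ∑ j, if i < j then (Ω i j : ℂ) * (inner ℂ (c i ψ) (c j ψ) : ℂ) else 0 := by
      rw [sum_inner]
      refine Finset.sum_congr rfl fun i _ => ?_
      rw [sum_inner]
      refine Finset.sum_congr rfl fun j _ => ?_
      by_cases h : i < j
      · simp only [h, if_true]
        rw [inner_smul_left, Complex.conj_ofReal]
        congr 1
        have h1 : (inner ℂ ((c i) ((c j) ψ)) ψ : ℂ) = -(inner ℂ (c j ψ) (c i ψ) : ℂ) :=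
          hskew i (c j ψ) ψ
        rw [h1]
        exact (hGswap i j (ne_of_lt h)).symm
      · simp [h]
    rw [inner_smul_left, Complex.conj_I, hSz]
    rw [show ∀ z : ℂ, (-Complex.I * z).re = z.im by intro z; simp]
    rw [Complex.im_sum]
    refine Finset.sum_congr rfl fun i _ => ?_
    rw [Complex.im_sum]
    refine Finset.sum_congr rfl fun j _ => ?_
    by_cases h : i < j
    · simp only [h, if_true]
      rw [Complex.mul_im]
      simp only [Complex.ofReal_re, Complex.ofReal_im, zero_mul, add_zero]
      rfl
    · simp [h]
  rw [hmain]
  -- Cauchy-Schwarz over pairs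
  set A : ℝ := ∑ i, ∑ j, if i < j then (Ω i j) ^ 2 else 0 with hA_def
  set B : ℝ := ∑ i, ∑ j, if i < j then (T i j) ^ 2 else 0 with hB_def
  set P : ℝ := ∑ i, ∑ j, if i < j then Ω i j * T i j else 0 with hP_def
  have hA0 : 0 ≤ A := by
    rw [hA_def]
    apply Finset.sum_nonneg; intro i _; apply Finset.sum_nonneg; intro j _
    by_cases h : i < j <;> simp [h, sq_nonneg]
  have hB0 : 0 ≤ B := by
    rw [hB_def]
    apply Finset.sum_nonneg; intro i _; apply Finset.sum_nonneg; intro j _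
    by_cases h : i < j <;> simp [h, sq_nonneg]
  have hCS : P ^ 2 ≤ A * B := by
    have h := Finset.sum_mul_sq_le_sq_mul_sq Finset.univ
      (fun p : Fin n × Fin n => if p.1 < p.2 then Ω p.1 p.2 else 0)
      (fun p : Fin n × Fin n => if p.1 < p.2 then T p.1 p.2 else 0)
    have e1 : ∑ p : Fin n × Fin n, (if p.1 < p.2 then Ω p.1 p.2 else 0)
        * (if p.1 < p.2 then T p.1 p.2 else 0) = P := by
      rw [hP_def, ← Finset.sum_product']
      refine Finset.sum_congr rfl fun p _ => ?_
      by_cases h' : p.1 < p.2 <;> simp [h']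
    have e2 : ∑ p : Fin n × Fin n, (if p.1 < p.2 then Ω p.1 p.2 else 0) ^ 2 = A := by
      rw [hA_def, ← Finset.sum_product']
      refine Finset.sum_congr rfl fun p _ => ?_
      by_cases h' : p.1 < p.2 <;> simp [h']
    have e3 : ∑ p : Fin n × Fin n, (if p.1 < p.2 then T p.1 p.2 else 0) ^ 2 = B := by
      rw [hB_def, ← Finset.sum_product']
      refine Finset.sum_congr rfl fun p _ => ?_
      by_cases h' : p.1 < p.2 <;> simp [h']
    rw [e1, e2, e3] at h
    exact h
  -- bound B
  have hdouble : ∑ j, ∑ k, T j k ^ 2 = 2 * B := by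
    have split : ∀ j k : Fin n, T j k ^ 2
        = (if j < k then T j k ^ 2 else 0) + (if k < j then T j k ^ 2 else 0)
          + (if j = k then T j k ^ 2 else 0) := by
      intro j k
      rcases lt_trichotomy j k with h | h | h
      · simp [h, ne_of_gt, ne_of_lt, not_lt_of_gt, h.ne, asymm h]
      · simp [h, lt_irrefl]
      · simp [h, h.ne', asymm h, not_lt_of_gt h]
    rw [Finset.sum_congr rfl fun j _ => Finset.sum_congr rfl fun k _ => split j k]
    rw [Finset.sum_congr rfl fun j _ => Finset.sum_add_distrib, Finset.sum_add_distrib]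
    rw [Finset.sum_congr rfl fun j _ => Finset.sum_add_distrib, Finset.sum_add_distrib]
    have t1 : ∑ j, ∑ k, (if j < k then T j k ^ 2 else 0) = B := by rw [hB_def]
    have t3 : ∑ j, ∑ k, (if j = k then T j k ^ 2 else 0) = 0 := by
      refine Finset.sum_eq_zero fun j _ => ?_
      rw [Finset.sum_ite_eq Finset.univ j (fun k => T j k ^ 2)]
      simp [hTdiag j]
    have t2 : ∑ j, ∑ k, (if k < j then T j k ^ 2 else 0) = B := by
      rw [Finset.sum_comm]
      rw [hB_def]
      refine Finset.sum_congr rfl fun k _ => Finset.sum_congr rfl fun j _ => ?_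
      by_cases h : k < j
      · simp only [h, if_true]
        rw [hTskew k j]
        ring
      · simp [h]
    rw [t1, t2, t3]
    ring
  have hBbound : B ≤ ((n / 2 : ℕ) : ℝ) * s ^ 2 := by
    have := hkey
    rw [hdouble] at this
    linarith
  -- final assembly
  have hPabs : |P| ≤ Real.sqrt A * (Real.sqrt ((n / 2 : ℕ) : ℝ) * s) := by
    have h1 : |P| ≤ Real.sqrt (A * B) := Real.abs_le_sqrt hCS
    have h2 : Real.sqrt (A * B) = Real.sqrt A * Real.sqrt B := Real.sqrt_mul hA0 B
    have h3 : Real.sqrt B ≤ Real.sqrt (((n / 2 : ℕ) : ℝ) * s ^ 2) := Real.sqrt_le_sqrt hBbound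
    have h4 : Real.sqrt (((n / 2 : ℕ) : ℝ) * s ^ 2)
        = Real.sqrt ((n / 2 : ℕ) : ℝ) * s := by
      rw [Real.sqrt_mul (by positivity) (s ^ 2), Real.sqrt_sq hs]
    calc |P| ≤ Real.sqrt A * Real.sqrt B := by rw [← h2]; exact h1
      _ ≤ Real.sqrt A * (Real.sqrt ((n / 2 : ℕ) : ℝ) * s) := by
          rw [← h4]
          exact mul_le_mul_of_nonneg_left h3 (Real.sqrt_nonneg A)
  have hfin : -(Real.sqrt ((n / 2 : ℕ) : ℝ) * (Real.sqrt A * s)) ≤ P := by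
    have := neg_abs_le P
    nlinarith [hPabs, this]
  calc -(2 * Real.sqrt ((n / 2 : ℕ) : ℝ) / 2) * Real.sqrt A * s
      = -(Real.sqrt ((n / 2 : ℕ) : ℝ) * (Real.sqrt A * s)) := by ring
    _ ≤ P := hfin
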